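/- Let X be a finite metric space partitioned into two disjoint groups X_1, X_2, let k_1, k_2 ≥ 1 with |X_i| ≥ k_i for i = 1,2 and k = k_1 + k_2 ≥ 2, and let ε ∈ (0,1). Suppose that for every μ in the grid U there are: a greedy candidate S_μ on Y = X with threshold μ and capacity k, and for each i ∈ {1,2} a greedy candidate S_{μ,i} on Y = X_i with threshold μ and capacity k_i. Then there exists a fair set S contained in ⋃_{μ∈U} (S_μ ∪ S_{μ,1} ∪ S_{μ,2}) with div(S) ≥ ((1−ε)/4) · OPT_f. (Theorem 2: the (1−ε)/4 approximation guarantee of SFDM1 for fair max–min diversity maximization with two groups.) -/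

import Mathlib

open Finset

variable {α : Type*} [MetricSpace α] [DecidableEq α]

/-- A finite set `S` is `μ`-separated if `d(x,y) ≥ μ` for all distinct `x, y ∈ S`. -/
def Separated (μ : ℝ) (S : Finset α) : Prop :=
  ∀ x ∈ S, ∀ y ∈ S, x ≠ y → μ ≤ dist x y

/-- Max–min diversity of a finite set: the minimum pairwise distance over distinct pairs. -/
noncomputable def divers (S : Finset α) : ℝ :=
  sInf {r : ℝ | ∃ x ∈ S, ∃ y ∈ S, x ≠ y ∧ dist x y = r}

/-- Distance from a point to a (nonempty) finite set: `d(y,S) = min_{s ∈ S} d(y,s)`. -/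
noncomputable def setDist (y : α) (S : Finset α) : ℝ :=
  sInf {r : ℝ | ∃ s ∈ S, dist y s = r}

/-- Minimum pairwise distance over distinct pairs of `X`. -/
noncomputable def dMin (X : Finset α) : ℝ :=
  sInf {r : ℝ | ∃ x ∈ X, ∃ y ∈ X, x ≠ y ∧ dist x y = r}

/-- Maximum pairwise distance over distinct pairs of `X`. -/
noncomputable def dMax (X : Finset α) : ℝ :=
  sSup {r : ℝ | ∃ x ∈ X, ∃ y ∈ X, x ≠ y ∧ dist x y = r}

/-- The geometric grid of guesses `U = { d_min/(1-ε)^j : j ∈ ℕ } ∩ [d_min, d_max]`. -/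
def grid (X : Finset α) (ε : ℝ) : Set ℝ :=
  {μ | (∃ j : ℕ, μ = dMin X / (1 - ε) ^ j) ∧ dMin X ≤ μ ∧ μ ≤ dMax X}

/-- A greedy candidate on ground set `Y` with threshold `μ` and capacity `c`:
`S ⊆ Y`, `S` is `μ`-separated, `|S| ≤ c`, and if `|S| < c` then every `y ∈ Y`
satisfies `d(y,S) < μ` (i.e., has some element of `S` within distance `< μ`). -/
def GreedyCandidate (μ : ℝ) (c : ℕ) (Y S : Finset α) : Prop :=
  S ⊆ Y ∧ Separated μ S ∧ S.card ≤ c ∧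
    (S.card < c → ∀ y ∈ Y, ∃ s ∈ S, dist y s < μ)

/-- `OPT`: the maximum of `div(T)` over all `k`-element subsets `T ⊆ X`. -/
noncomputable def OPTk (X : Finset α) (k : ℕ) : ℝ :=
  sSup {r : ℝ | ∃ T ⊆ X, T.card = k ∧ divers T = r}

/-- `OPT_f`: the maximum of `div(S)` over all fair subsets `S ⊆ X`
(those with `|S ∩ X_i| = k_i` for every group `i`). -/
noncomputable def OPTf (X : Finset α) {m : ℕ} (Xg : Fin m → Finset α) (kg : Fin m → ℕ) : ℝ :=
  sSup {r : ℝ | ∃ S ⊆ X, (∀ i, (S ∩ Xg i).card = kg i) ∧ divers S = r}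

/-- The chain relation on `P` with threshold `τ`: the reflexive–transitive closure of
"both points are in `P` and their distance is `< τ`". -/
def ChainRel (P : Finset α) (τ : ℝ) : α → α → Prop :=
  Relation.ReflTransGen (fun x y => x ∈ P ∧ y ∈ P ∧ dist x y < τ)

-- AUX

/-- pairwise distance set -/
def pdSet (S : Finset α) : Set ℝ := {r : ℝ | ∃ x ∈ S, ∃ y ∈ S, x ≠ y ∧ dist x y = r}

omit [DecidableEq α] in
lemma pdSet_finite (S : Finset α) : (pdSet S).Finite := by
  apply Set.Finite.subset (Set.Finite.image (fun p : α × α => dist p.1 p.2)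
    ((S ×ˢ S).finite_toSet))
  rintro r ⟨x, hx, y, hy, -, hd⟩
  exact ⟨(x, y), by simp [hx, hy], hd⟩

omit [DecidableEq α] in
lemma pdSet_bddBelow (S : Finset α) : BddBelow (pdSet S) := by
  refine ⟨0, ?_⟩
  rintro r ⟨x, hx, y, hy, -, hd⟩
  rw [← hd]; exact dist_nonneg

omit [DecidableEq α] in
lemma divers_le_dist {S : Finset α} {x y : α} (hx : x ∈ S) (hy : y ∈ S) (hxy : x ≠ y) :
    divers S ≤ dist x y :=
  csInf_le (pdSet_bddBelow S) ⟨x, hx, y, hy, hxy, rfl⟩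

lemma greedy_full {μ : ℝ} {c : ℕ} {Y S W : Finset α} (hg : GreedyCandidate μ c Y S)
    (hWY : W ⊆ Y) (hWc : c ≤ W.card)
    (hsep : ∀ x ∈ W, ∀ y ∈ W, x ≠ y → 2 * μ ≤ dist x y) : S.card = c := by
  classical
  rcases hg with ⟨-, -, hle, hcov⟩
  rcases eq_or_lt_of_le hle with h | h
  · exact h
  exfalso
  have hcov' := hcov h
  set f : α → α := fun w => if hw : ∃ s ∈ S, dist w s < μ then hw.choose else w with hf
  have hmaps : ∀ w ∈ W, f w ∈ S := by
    intro w hw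
    have h' := hcov' w (hWY hw)
    rw [hf]; simp only; rw [dif_pos h']
    exact h'.choose_spec.1
  obtain ⟨x, hx, y, hy, hxy, hfxy⟩ :=
    exists_ne_map_eq_of_card_lt_of_maps_to (lt_of_lt_of_le h hWc) hmaps
  have hx' := hcov' x (hWY hx)
  have hy' := hcov' y (hWY hy)
  have hfx : f x = hx'.choose := by rw [hf]; simp only; rw [dif_pos hx']
  have hfy : f y = hy'.choose := by rw [hf]; simp only; rw [dif_pos hy']
  have h1 := hx'.choose_spec.2
  have h2 := hy'.choose_spec.2
  rw [hfx, hfy] at hfxy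
  rw [hfxy] at h1
  have : dist x y < 2 * μ := by
    calc dist x y ≤ dist x hy'.choose + dist hy'.choose y := dist_triangle _ _ _
    _ < μ + μ := add_lt_add h1 (by rwa [dist_comm])
    _ = 2 * μ := by ring
  exact absurd (hsep x hx y hy hxy) (not_le.mpr this)

lemma combine_aux (X₁ X₂ : Finset α) (hdisj : Disjoint X₁ X₂) (μ : ℝ) (hμ : 0 < μ)
    (k₁ k₂ : ℕ) (S₀ T : Finset α) (hS₀sub : S₀ ⊆ X₁ ∪ X₂) (hS₀sep : Separated μ S₀)
    (hS₀card : S₀.card = k₁ + k₂) (hTsub : T ⊆ X₁) (hTsep : Separated μ T)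
    (hTcard : T.card = k₁) (ha : (S₀ ∩ X₁).card ≤ k₁) :
    ∃ S : Finset α, S ⊆ S₀ ∪ T ∧ (S ∩ X₁).card = k₁ ∧ (S ∩ X₂).card = k₂ ∧
      Separated (μ / 2) S := by
  classical
  set A := S₀ ∩ X₁ with hA
  set B := S₀ ∩ X₂ with hB
  have hABdisj : Disjoint A B := hdisj.mono inter_subset_right inter_subset_right
  have hABunion : A ∪ B = S₀ := by
    rw [hA, hB, ← inter_union_distrib_left]
    exact inter_eq_left.mpr hS₀sub
  have hABcard : A.card + B.card = k₁ + k₂ := by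
    rw [← card_union_of_disjoint hABdisj, hABunion, hS₀card]
  set a := A.card with haA
  set M := T.filter (fun x => ∃ s ∈ A, dist x s < μ / 2) with hM
  have hMcard : M.card ≤ a := by
    apply card_le_card_of_injOn
      (fun x => if h : ∃ s ∈ A, dist x s < μ / 2 then h.choose else x)
    · intro x hx
      have hx' : x ∈ T ∧ ∃ s ∈ A, dist x s < μ / 2 := by
        simpa [hM] using hx
      simp only [dif_pos hx'.2]
      exact hx'.2.choose_spec.1
    · intro x hx y hy hxy
      have hx' : x ∈ T ∧ ∃ s ∈ A, dist x s < μ / 2 := by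
        simpa [hM] using hx
      have hy' : y ∈ T ∧ ∃ s ∈ A, dist y s < μ / 2 := by
        simpa [hM] using hy
      simp only at hxy
      rw [dif_pos hx'.2, dif_pos hy'.2] at hxy
      by_contra hne
      have h1 := hx'.2.choose_spec.2
      have h2 := hy'.2.choose_spec.2
      rw [hxy] at h1
      have hlt : dist x y < μ := by
        calc dist x y ≤ dist x hy'.2.choose + dist hy'.2.choose y := dist_triangle _ _ _
        _ < μ / 2 + μ / 2 := add_lt_add h1 (by rwa [dist_comm])
        _ = μ := by ring
      exact absurd (hTsep x hx'.1 y hy'.1 hne) (not_le.mpr hlt)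
  have hMT : M ⊆ T := filter_subset _ _
  have hcardTM : k₁ - a ≤ (T \ M).card := by
    rw [card_sdiff_of_subset hMT, hTcard]
    omega
  obtain ⟨P, hPsub, hPcard⟩ := exists_subset_card_eq hcardTM
  have hPT : P ⊆ T := hPsub.trans (sdiff_subset)
  have hPX₁ : P ⊆ X₁ := hPT.trans hTsub
  have hPnotM : ∀ x ∈ P, ¬ ∃ s ∈ A, dist x s < μ / 2 := by
    intro x hx hex
    have hx' := hPsub hx
    rw [mem_sdiff, hM, mem_filter] at hx'
    exact hx'.2 ⟨hx'.1, hex⟩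
  set D := B.filter (fun s => ∃ x ∈ P, dist x s < μ / 2) with hD
  have hDcard : D.card ≤ k₁ - a := by
    calc D.card ≤ P.card := by
          apply card_le_card_of_injOn
            (fun s => if h : ∃ x ∈ P, dist x s < μ / 2 then h.choose else s)
          · intro s hs
            have hs' : s ∈ B ∧ ∃ x ∈ P, dist x s < μ / 2 := by
              simpa [hD] using hs
            simp only [dif_pos hs'.2]
            exact hs'.2.choose_spec.1
          · intro s hs t ht hst
            have hs' : s ∈ B ∧ ∃ x ∈ P, dist x s < μ / 2 := by
              simpa [hD] using hs
            have ht' : t ∈ B ∧ ∃ x ∈ P, dist x t < μ / 2 := by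
              simpa [hD] using ht
            simp only at hst
            rw [dif_pos hs'.2, dif_pos ht'.2] at hst
            by_contra hne
            have h1 := hs'.2.choose_spec.2
            have h2 := ht'.2.choose_spec.2
            rw [hst] at h1
            have hsS₀ : s ∈ S₀ := hABunion ▸ mem_union_right _ hs'.1
            have htS₀ : t ∈ S₀ := hABunion ▸ mem_union_right _ ht'.1
            have hlt : dist s t < μ := by
              calc dist s t ≤ dist s ht'.2.choose + dist ht'.2.choose t := dist_triangle _ _ _
              _ < μ / 2 + μ / 2 := add_lt_add (by rwa [dist_comm]) h2
              _ = μ := by ring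
            exact absurd (hS₀sep s hsS₀ t htS₀ hne) (not_le.mpr hlt)
      _ = k₁ - a := hPcard
  have hDB : D ⊆ B := filter_subset _ _
  have hBcard : k₁ - a ≤ B.card := by omega
  obtain ⟨R, hDR, hRB, hRcard⟩ := exists_subsuperset_card_eq hDB hDcard hBcard
  have hRX₂ : R ⊆ X₂ := hRB.trans inter_subset_right
  refine ⟨(S₀ \ R) ∪ P, union_subset_union sdiff_subset hPT, ?_, ?_, ?_⟩
  · have hPA : Disjoint P A := by
      rw [disjoint_left]
      intro x hxP hxA
      exact hPnotM x hxP ⟨x, hxA, by simpa using half_pos hμ⟩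
    have h1 : ((S₀ \ R) ∪ P) ∩ X₁ = A ∪ P := by
      ext x
      simp only [mem_inter, mem_union, mem_sdiff, hA]
      constructor
      · rintro ⟨⟨hS, _⟩ | hP, hX⟩
        · exact Or.inl ⟨hS, hX⟩
        · exact Or.inr hP
      · rintro (⟨hS, hX⟩ | hP)
        · exact ⟨Or.inl ⟨hS, fun hR => disjoint_left.mp hdisj hX (hRX₂ hR)⟩, hX⟩
        · exact ⟨Or.inr hP, hPX₁ hP⟩
    rw [h1, card_union_of_disjoint hPA.symm, hPcard]
    omega
  · have h2 : ((S₀ \ R) ∪ P) ∩ X₂ = B \ R := by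
      ext x
      simp only [mem_inter, mem_union, mem_sdiff, hB]
      constructor
      · rintro ⟨⟨hS, hR⟩ | hP, hX⟩
        · exact ⟨⟨hS, hX⟩, hR⟩
        · exact absurd hX (disjoint_left.mp hdisj (hPX₁ hP))
      · rintro ⟨⟨hS, hX⟩, hR⟩
        exact ⟨Or.inl ⟨hS, hR⟩, hX⟩
    rw [h2, card_sdiff_of_subset hRB, hRcard]
    omega
  · have key : ∀ x ∈ P, ∀ y ∈ S₀ \ R, μ / 2 ≤ dist x y := by
      intro x hx y hy
      by_contra hlt
      rw [not_le] at hlt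
      rw [mem_sdiff] at hy
      have hyAB : y ∈ A ∪ B := hABunion ▸ hy.1
      rcases mem_union.mp hyAB with hyA | hyB
      · exact hPnotM x hx ⟨y, hyA, hlt⟩
      · have : y ∈ D := by
          rw [hD, mem_filter]
          exact ⟨hyB, x, hx, hlt⟩
        exact hy.2 (hDR this)
    intro x hx y hy hne
    rcases mem_union.mp hx with hx' | hx' <;> rcases mem_union.mp hy with hy' | hy'
    · calc μ / 2 ≤ μ := by linarith
        _ ≤ dist x y := hS₀sep x (mem_sdiff.mp hx').1 y (mem_sdiff.mp hy').1 hne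
    · rw [dist_comm]
      exact key y hy' x hx'
    · exact key x hx' y hy'
    · calc μ / 2 ≤ μ := by linarith
        _ ≤ dist x y := hTsep x (hPT hx') y (hPT hy') hne


/-- Theorem 2: the `(1-ε)/4` approximation guarantee of SFDM1 for fair max–min
diversity maximization with two groups. -/
theorem stmt_6 (X X₁ X₂ : Finset α) (k₁ k₂ : ℕ) (ε : ℝ)
    (hdisj : Disjoint X₁ X₂) (hunion : X = X₁ ∪ X₂)
    (hne₁ : X₁.Nonempty) (hne₂ : X₂.Nonempty)
    (hk₁ : 1 ≤ k₁) (hk₂ : 1 ≤ k₂)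
    (hc₁ : k₁ ≤ X₁.card) (hc₂ : k₂ ≤ X₂.card) (hk : 2 ≤ k₁ + k₂)
    (hε0 : 0 < ε) (hε1 : ε < 1)
    (S₀ S₁ S₂ : ℝ → Finset α)
    (hS₀ : ∀ μ ∈ grid X ε, GreedyCandidate μ (k₁ + k₂) X (S₀ μ))
    (hS₁ : ∀ μ ∈ grid X ε, GreedyCandidate μ k₁ X₁ (S₁ μ))
    (hS₂ : ∀ μ ∈ grid X ε, GreedyCandidate μ k₂ X₂ (S₂ μ)) :
    ∃ S : Finset α,
      (↑S : Set α) ⊆ (⋃ μ ∈ grid X ε, ((S₀ μ ∪ S₁ μ ∪ S₂ μ : Finset α) : Set α)) ∧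
      (S ∩ X₁).card = k₁ ∧ (S ∩ X₂).card = k₂ ∧
      (1 - ε) / 4 *
        sSup {r : ℝ | ∃ S' ⊆ X, (S' ∩ X₁).card = k₁ ∧ (S' ∩ X₂).card = k₂ ∧ divers S' = r}
        ≤ divers S := by
  classical
  set OPT := sSup {r : ℝ | ∃ S' ⊆ X, (S' ∩ X₁).card = k₁ ∧ (S' ∩ X₂).card = k₂ ∧ divers S' = r}
    with hOPT
  -- the optimal value is attained by some fair set T
  have hX₁X : X₁ ⊆ X := by rw [hunion]; exact subset_union_left
  have hX₂X : X₂ ⊆ X := by rw [hunion]; exact subset_union_right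
  have hfair_inter : ∀ U₁ U₂ : Finset α, U₁ ⊆ X₁ → U₂ ⊆ X₂ →
      (U₁ ∪ U₂) ∩ X₁ = U₁ ∧ (U₁ ∪ U₂) ∩ X₂ = U₂ := by
    intro U₁ U₂ h1 h2
    constructor
    · rw [union_inter_distrib_right, inter_eq_left.mpr h1,
        disjoint_iff_inter_eq_empty.mp (hdisj.symm.mono_left h2), union_empty]
    · rw [union_inter_distrib_right, inter_eq_left.mpr h2,
        disjoint_iff_inter_eq_empty.mp (hdisj.mono_left h1), empty_union]
  have hTset_ne : ({r : ℝ | ∃ S' ⊆ X, (S' ∩ X₁).card = k₁ ∧ (S' ∩ X₂).card = k₂ ∧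
      divers S' = r}).Nonempty := by
    obtain ⟨T₁, hT₁sub, hT₁card⟩ := exists_subset_card_eq hc₁
    obtain ⟨T₂, hT₂sub, hT₂card⟩ := exists_subset_card_eq hc₂
    obtain ⟨e1, e2⟩ := hfair_inter T₁ T₂ hT₁sub hT₂sub
    exact ⟨divers (T₁ ∪ T₂), T₁ ∪ T₂, union_subset (hT₁sub.trans hX₁X) (hT₂sub.trans hX₂X),
      by rw [e1]; exact hT₁card, by rw [e2]; exact hT₂card, rfl⟩
  have hTset_fin : ({r : ℝ | ∃ S' ⊆ X, (S' ∩ X₁).card = k₁ ∧ (S' ∩ X₂).card = k₂ ∧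
      divers S' = r}).Finite := by
    apply Set.Finite.subset (Set.Finite.image divers (X.powerset.finite_toSet))
    rintro r ⟨S', hS', -, -, hd⟩
    exact ⟨S', by simpa using hS', hd⟩
  have hmem := hTset_ne.csSup_mem hTset_fin
  obtain ⟨T, hTX, hT1, hT2, hTopt⟩ := hmem
  rw [← hOPT] at hTopt
  -- basic facts about X
  obtain ⟨x₀, hx₀⟩ := hne₁
  obtain ⟨y₀, hy₀⟩ := hne₂
  have hx₀y₀ : x₀ ≠ y₀ := fun h => disjoint_left.mp hdisj hx₀ (h ▸ hy₀)
  have hXpd_ne : (pdSet X).Nonempty := ⟨dist x₀ y₀, x₀, hX₁X hx₀, y₀, hX₂X hy₀, hx₀y₀, rfl⟩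
  have hdMin_mem : dMin X ∈ pdSet X := hXpd_ne.csInf_mem (pdSet_finite X)
  have hdMin_pos : 0 < dMin X := by
    obtain ⟨x, -, y, -, hxy, hd⟩ := hdMin_mem
    rw [← hd]; exact dist_pos.mpr hxy
  have hdMin_le : ∀ x ∈ X, ∀ y ∈ X, x ≠ y → dMin X ≤ dist x y := by
    intro x hx y hy hxy
    exact csInf_le (pdSet_bddBelow X) ⟨x, hx, y, hy, hxy, rfl⟩
  have hle_dMax : ∀ x ∈ X, ∀ y ∈ X, x ≠ y → dist x y ≤ dMax X := by
    intro x hx y hy hxy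
    exact le_csSup ((pdSet_finite X).bddAbove) ⟨x, hx, y, hy, hxy, rfl⟩
  -- facts about T
  obtain ⟨t₁, ht₁⟩ := card_pos.mp (show 0 < (T ∩ X₁).card by rw [hT1]; omega)
  obtain ⟨t₂, ht₂⟩ := card_pos.mp (show 0 < (T ∩ X₂).card by rw [hT2]; omega)
  have ht₁T : t₁ ∈ T := (mem_inter.mp ht₁).1
  have ht₂T : t₂ ∈ T := (mem_inter.mp ht₂).1
  have ht₁₂ : t₁ ≠ t₂ := fun h =>
    disjoint_left.mp hdisj (mem_inter.mp ht₁).2 (h ▸ (mem_inter.mp ht₂).2)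
  have hTpd_ne : (pdSet T).Nonempty := ⟨dist t₁ t₂, t₁, ht₁T, t₂, ht₂T, ht₁₂, rfl⟩
  have hOPT_le_pairs : ∀ x ∈ T, ∀ y ∈ T, x ≠ y → OPT ≤ dist x y := by
    intro x hx y hy hxy
    rw [← hTopt]
    exact divers_le_dist hx hy hxy
  have hdMin_le_OPT : dMin X ≤ OPT := by
    rw [← hTopt]
    refine le_csInf hTpd_ne ?_
    rintro r ⟨x, hx, y, hy, hxy, hd⟩
    rw [← hd]
    exact hdMin_le x (hTX hx) y (hTX hy) hxy
  have hOPT_pos : 0 < OPT := lt_of_lt_of_le hdMin_pos hdMin_le_OPT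
  have hOPT_le_dMax : OPT ≤ dMax X := by
    rw [← hTopt]
    calc divers T ≤ dist t₁ t₂ := divers_le_dist ht₁T ht₂T ht₁₂
      _ ≤ dMax X := hle_dMax t₁ (hTX ht₁T) t₂ (hTX ht₂T) ht₁₂
  have hdMin_le_dMax : dMin X ≤ dMax X := le_trans hdMin_le_OPT hOPT_le_dMax
  have hεpos : (0:ℝ) < 1 - ε := by linarith
  -- choose the grid value μ
  obtain ⟨μ, hμgrid, hμlow, hcase⟩ :
      ∃ μ, μ ∈ grid X ε ∧ (1 - ε) * OPT / 2 ≤ μ ∧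
        (2 * μ ≤ OPT ∨ ∀ x ∈ X, ∀ y ∈ X, dist x y < μ → x = y) := by
    by_cases h2 : 2 * dMin X ≤ OPT
    · obtain ⟨N, hN⟩ := exists_pow_lt_of_lt_one
        (div_pos (by linarith : (0:ℝ) < 2 * dMin X) hOPT_pos) (by linarith : 1 - ε < 1)
      set Q : ℕ → Prop := fun j => dMin X / (1 - ε) ^ j ≤ OPT / 2 with hQ
      have hQ0 : Q 0 := by
        rw [hQ]; simp only [pow_zero, div_one]; linarith
      have hnotQN : ¬ Q N := by
        rw [hQ]; simp only [not_le]
        have hpow : 0 < (1 - ε) ^ N := pow_pos hεpos N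
        rw [lt_div_iff₀ hpow]
        have hmul := mul_lt_mul_of_pos_right hN (half_pos hOPT_pos)
        have heq : (2 * dMin X / OPT) * (OPT / 2) = dMin X := by field_simp
        rw [heq] at hmul
        linarith [hmul]
      set j := Nat.findGreatest Q N with hj
      have hQj : Q j := Nat.findGreatest_spec (Nat.zero_le N) hQ0
      have hjN : j ≠ N := fun h => hnotQN (h ▸ hQj)
      have hjltN : j < N := lt_of_le_of_ne (Nat.findGreatest_le N) hjN
      have hnotQj1 : ¬ Q (j + 1) := Nat.findGreatest_is_greatest (Nat.lt_succ_self j) hjltN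
      have hpowj : 0 < (1 - ε) ^ j := pow_pos hεpos j
      have hQj' : dMin X / (1 - ε) ^ j ≤ OPT / 2 := hQj
      have hnotQj1' : OPT / 2 < dMin X / (1 - ε) ^ (j + 1) := not_le.mp hnotQj1
      refine ⟨dMin X / (1 - ε) ^ j, ⟨⟨j, rfl⟩, ?_, ?_⟩, ?_, Or.inl (by linarith)⟩
      · rw [le_div_iff₀ hpowj]
        have hle1 : (1 - ε) ^ j ≤ 1 := pow_le_one₀ (le_of_lt hεpos) (by linarith)
        nlinarith [hdMin_pos]
      · linarith
      · rw [pow_succ, ← div_div] at hnotQj1'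
        rw [lt_div_iff₀ hεpos] at hnotQj1'
        linarith
    · refine ⟨dMin X, ⟨⟨0, by simp⟩, le_refl _, hdMin_le_dMax⟩, by nlinarith, Or.inr ?_⟩
      intro x hx y hy hd
      by_contra hne
      exact absurd hd (not_lt.mpr (hdMin_le x hx y hy hne))
  have hμpos : 0 < μ := lt_of_lt_of_le hdMin_pos hμgrid.2.1
  have hg₀ := hS₀ μ hμgrid
  have hg₁ := hS₁ μ hμgrid
  have hg₂ := hS₂ μ hμgrid
  -- full cardinalities of the candidates
  have hTcardX : T.card = k₁ + k₂ := by
    have hT' : T = (T ∩ X₁) ∪ (T ∩ X₂) := by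
      rw [← inter_union_distrib_left, ← hunion]
      exact (inter_eq_left.mpr hTX).symm
    rw [hT', card_union_of_disjoint (hdisj.mono inter_subset_right inter_subset_right), hT1, hT2]
  have hXcard : k₁ + k₂ ≤ X.card := by
    rw [hunion, card_union_of_disjoint hdisj]
    omega
  have hfull : (S₀ μ).card = k₁ + k₂ ∧ (S₁ μ).card = k₁ ∧ (S₂ μ).card = k₂ := by
    rcases hcase with hc | hc
    · have hsepT : ∀ x ∈ T, ∀ y ∈ T, x ≠ y → 2 * μ ≤ dist x y := by
        intro x hx y hy hxy
        calc 2 * μ ≤ OPT := hc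
          _ ≤ dist x y := hOPT_le_pairs x hx y hy hxy
      refine ⟨greedy_full hg₀ hTX (le_of_eq hTcardX.symm) hsepT,
        greedy_full hg₁ inter_subset_right (le_of_eq hT1.symm) ?_,
        greedy_full hg₂ inter_subset_right (le_of_eq hT2.symm) ?_⟩
      · intro x hx y hy hxy
        exact hsepT x (mem_inter.mp hx).1 y (mem_inter.mp hy).1 hxy
      · intro x hx y hy hxy
        exact hsepT x (mem_inter.mp hx).1 y (mem_inter.mp hy).1 hxy
    · have hfull_of_cov : ∀ (c : ℕ) (Y S : Finset α), Y ⊆ X → c ≤ Y.card →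
          GreedyCandidate μ c Y S → S.card = c := by
        intro c Y S hYX hcY hg
        rcases hg with ⟨hSY, -, hle, hcov⟩
        rcases eq_or_lt_of_le hle with h | h
        · exact h
        exfalso
        have hYS : Y ⊆ S := by
          intro y hy
          obtain ⟨s, hs, hds⟩ := hcov h y hy
          have := hc y (hYX hy) s (hYX (hSY hs)) hds
          exact this ▸ hs
        have := card_le_card hYS
        omega
      exact ⟨hfull_of_cov _ _ _ (le_refl X) hXcard hg₀,
        hfull_of_cov _ _ _ hX₁X hc₁ hg₁, hfull_of_cov _ _ _ hX₂X hc₂ hg₂⟩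
  obtain ⟨hcard₀, hcard₁, hcard₂⟩ := hfull
  have hS₀subX : S₀ μ ⊆ X₁ ∪ X₂ := hunion ▸ hg₀.1
  have hsum : (S₀ μ ∩ X₁).card + (S₀ μ ∩ X₂).card = k₁ + k₂ := by
    rw [← card_union_of_disjoint (hdisj.mono inter_subset_right inter_subset_right),
      ← inter_union_distrib_left, inter_eq_left.mpr hS₀subX, hcard₀]
  -- the common finishing step
  have hfinish : ∀ S : Finset α, Separated (μ / 2) S →
      (S ∩ X₁).card = k₁ → (S ∩ X₂).card = k₂ →
      (1 - ε) / 4 * OPT ≤ divers S := by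
    intro S hSsep hSc1 hSc2
    obtain ⟨u, hu⟩ := card_pos.mp (show 0 < (S ∩ X₁).card by rw [hSc1]; omega)
    obtain ⟨v, hv⟩ := card_pos.mp (show 0 < (S ∩ X₂).card by rw [hSc2]; omega)
    have huv : u ≠ v := fun h =>
      disjoint_left.mp hdisj (mem_inter.mp hu).2 (h ▸ (mem_inter.mp hv).2)
    have hdiv : μ / 2 ≤ divers S := by
      refine le_csInf ⟨dist u v, u, (mem_inter.mp hu).1, v, (mem_inter.mp hv).1, huv, rfl⟩ ?_
      rintro r ⟨x, hxS, y, hyS, hxy, hd⟩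
      rw [← hd]
      exact hSsep x hxS y hyS hxy
    linarith
  by_cases hsplit : (S₀ μ ∩ X₁).card ≤ k₁
  · obtain ⟨S, hSsub, hSc1, hSc2, hSsep⟩ := combine_aux X₁ X₂ hdisj μ hμpos k₁ k₂ (S₀ μ) (S₁ μ)
      hS₀subX hg₀.2.1 hcard₀ hg₁.1 hg₁.2.1 hcard₁ hsplit
    refine ⟨S, ?_, hSc1, hSc2, hfinish S hSsep hSc1 hSc2⟩
    intro x hx
    refine Set.mem_biUnion hμgrid ?_
    simp only [coe_union, Set.mem_union, mem_coe]
    rcases mem_union.mp (hSsub (mem_coe.mp hx)) with h | h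
    · exact Or.inl (Or.inl h)
    · exact Or.inl (Or.inr h)
  · have hsplit₂ : (S₀ μ ∩ X₂).card ≤ k₂ := by omega
    have hS₀subX' : S₀ μ ⊆ X₂ ∪ X₁ := by rw [union_comm]; exact hS₀subX
    have hcard₀' : (S₀ μ).card = k₂ + k₁ := by omega
    obtain ⟨S, hSsub, hSc2, hSc1, hSsep⟩ := combine_aux X₂ X₁ hdisj.symm μ hμpos k₂ k₁ (S₀ μ)
      (S₂ μ) hS₀subX' hg₀.2.1 hcard₀' hg₂.1 hg₂.2.1 hcard₂ hsplit₂
    refine ⟨S, ?_, hSc1, hSc2, hfinish S hSsep hSc1 hSc2⟩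
    intro x hx
    refine Set.mem_biUnion hμgrid ?_
    simp only [coe_union, Set.mem_union, mem_coe]
    rcases mem_union.mp (hSsub (mem_coe.mp hx)) with h | h
    · exact Or.inl (Or.inl h)
    · exact Or.inr h
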